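/- Given nonnegative integer tuples r = (r_1,...,r_m) with each r_i ≤ n and c = (c_1,...,c_n) with each c_j ≤ m and Σ r_i = Σ c_j, there exists a (0,1)-matrix with row sums r and column sums c if and only if for every subset S ⊆ [m] and T ⊆ [n]: Σ_{i∈S} r_i ≤ |S|·(n−|T|) + Σ_{j∈T} c_j (equivalently, by the max-flow min-cut characterization of the associated bipartite flow network). -/

import Mathlib

/-- Row sums of a matrix. -/
def rowSum {m n : ℕ} (A : Matrix (Fin m) (Fin n) ℕ) (i : Fin m) : ℕ := ∑ j, A i j

/-- Column sums of a matrix. -/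
def colSum {m n : ℕ} (A : Matrix (Fin m) (Fin n) ℕ) (j : Fin n) : ℕ := ∑ i, A i j

/-- A (0,1)-matrix. -/
def ZeroOne {m n : ℕ} (A : Matrix (Fin m) (Fin n) ℕ) : Prop := ∀ i j, A i j ≤ 1

/-- A matrix is monotone if its row sums and column sums are nonincreasing. -/
def MonotoneMat {m n : ℕ} (A : Matrix (Fin m) (Fin n) ℕ) : Prop :=
  Antitone (rowSum A) ∧ Antitone (colSum A)

/-- The conjugate of the tuple `c`, with respect to bound `m`:
`s i = |{j : c j ≥ i}|` where `i` is read 1-indexed (so `i : Fin m` stands for `i+1`). -/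
def conjTuple (m : ℕ) {n : ℕ} (c : Fin n → ℕ) (i : Fin m) : ℕ :=
  (Finset.univ.filter (fun j => (i : ℕ) + 1 ≤ c j)).card

/-- `r` is majorized by `s`: partial sums of `r` are dominated by those of `s`,
with equal total sums. -/
def MajorizedBy {m : ℕ} (r s : Fin m → ℕ) : Prop :=
  (∀ h : Fin m, ∑ i ∈ Finset.Iic h, r i ≤ ∑ i ∈ Finset.Iic h, s i) ∧
  (∑ i, r i = ∑ i, s i)

/-- The type of a tuple: the number of distinct nonzero values among its components. -/
def tupleType {n : ℕ} (c : Fin n → ℕ) : ℕ :=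
  ((Finset.univ.image c).filter (fun x => x ≠ 0)).card

/-- From the cut criterion we get the "min form": for every row subset `S`,
`∑_{i∈S} r i ≤ ∑_j min |S| (c j)`. -/
private lemma cut_to_min {m n : ℕ} (r : Fin m → ℕ) (c : Fin n → ℕ)
    (hcut : ∀ S : Finset (Fin m), ∀ T : Finset (Fin n),
      ∑ i ∈ S, r i ≤ S.card * (n - T.card) + ∑ j ∈ T, c j) :
    ∀ S : Finset (Fin m), ∑ i ∈ S, r i ≤ ∑ j, min S.card (c j) := by
  intro S
  set T := Finset.univ.filter (fun j => c j ≤ S.card) with hT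
  have hTcard : T.card ≤ n := by
    simpa using Finset.card_le_univ T
  have h := hcut S T
  have heq : ∑ j, min S.card (c j) = S.card * (n - T.card) + ∑ j ∈ T, c j := by
    have h1 : ∑ j ∈ T, min S.card (c j) + ∑ j ∈ Tᶜ, min S.card (c j) = ∑ j, min S.card (c j) :=
      Finset.sum_add_sum_compl T _
    have h2 : ∑ j ∈ T, min S.card (c j) = ∑ j ∈ T, c j := by
      apply Finset.sum_congr rfl
      intro j hj
      rw [hT, Finset.mem_filter] at hj
      omega
    have h3 : ∑ j ∈ Tᶜ, min S.card (c j) = S.card * (n - T.card) := by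
      have hall : ∀ j ∈ Tᶜ, min S.card (c j) = S.card := by
        intro j hj
        rw [Finset.mem_compl, hT, Finset.mem_filter] at hj
        push_neg at hj
        have := hj (Finset.mem_univ j)
        omega
      rw [Finset.sum_congr rfl hall, Finset.sum_const, Finset.card_compl,
        Fintype.card_fin, smul_eq_mul, mul_comm]
    omega
  omega

/-- The "min form" bounds the cut values. -/
private lemma min_to_cut {m n : ℕ} (r : Fin m → ℕ) (c : Fin n → ℕ)
    (hmin : ∀ S : Finset (Fin m), ∑ i ∈ S, r i ≤ ∑ j, min S.card (c j)) :
    ∀ S : Finset (Fin m), ∀ T : Finset (Fin n),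
      ∑ i ∈ S, r i ≤ S.card * (n - T.card) + ∑ j ∈ T, c j := by
  intro S T
  have h1 : ∑ j ∈ T, min S.card (c j) + ∑ j ∈ Tᶜ, min S.card (c j) = ∑ j, min S.card (c j) :=
    Finset.sum_add_sum_compl T _
  have h2 : ∑ j ∈ T, min S.card (c j) ≤ ∑ j ∈ T, c j :=
    Finset.sum_le_sum fun j _ => min_le_right _ _
  have h3 : ∑ j ∈ Tᶜ, min S.card (c j) ≤ S.card * (n - T.card) := by
    calc ∑ j ∈ Tᶜ, min S.card (c j) ≤ ∑ _j ∈ Tᶜ, S.card :=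
          Finset.sum_le_sum fun j _ => min_le_left _ _
    _ = Tᶜ.card * S.card := by rw [Finset.sum_const, smul_eq_mul]
    _ = S.card * (n - T.card) := by
          rw [Finset.card_compl, Fintype.card_fin, mul_comm]
  have := hmin S
  omega

/-- Main construction: the min-form criterion implies existence of a (0,1)-matrix,
by strong induction on the total sum. -/
private lemma exists_matrix_of_min {m n : ℕ} :
    ∀ (N : ℕ) (r : Fin m → ℕ) (c : Fin n → ℕ), ∑ i, r i = N →
    ∑ i, r i = ∑ j, c j → (∀ i, r i ≤ n) →
    (∀ S : Finset (Fin m), ∑ i ∈ S, r i ≤ ∑ j, min S.card (c j)) →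
    ∃ A : Matrix (Fin m) (Fin n) ℕ, ZeroOne A ∧ rowSum A = r ∧ colSum A = c := by
  intro N
  induction N using Nat.strong_induction_on with
  | _ N IH =>
  intro r c hN hsum hrn hmin
  rcases Nat.eq_zero_or_pos N with h0 | hpos
  · subst h0
    have hr0 : ∀ i, r i = 0 := by
      intro i
      exact (Finset.sum_eq_zero_iff.mp hN) i (Finset.mem_univ i)
    have hc0 : ∀ j, c j = 0 := by
      have hcz : ∑ j, c j = 0 := by omega
      intro j
      exact (Finset.sum_eq_zero_iff.mp hcz) j (Finset.mem_univ j)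
    refine ⟨0, fun i j => by simp, ?_, ?_⟩
    · funext i; simp [rowSum, hr0 i]
    · funext j; simp [colSum, hc0 j]
  · -- N > 0 : pick a row of maximal sum
    have hex : ∃ i, 0 < r i := by
      by_contra h
      push_neg at h
      have : ∑ i, r i = 0 := Finset.sum_eq_zero fun i _ => by have := h i; omega
      omega
    obtain ⟨iw, hiw⟩ := hex
    obtain ⟨i0, -, hi0max⟩ :=
      Finset.exists_max_image Finset.univ r ⟨iw, Finset.mem_univ iw⟩
    set k := r i0 with hk
    have hkpos : 0 < k := lt_of_lt_of_le hiw (hi0max iw (Finset.mem_univ iw))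
    have hkn : k ≤ n := hrn i0
    -- choose a k-subset J of columns maximizing ∑_{j∈J} c j
    obtain ⟨J0, -, hJ0card⟩ :=
      Finset.exists_subset_card_eq (s := (Finset.univ : Finset (Fin n))) (n := k) (by simpa using hkn)
    have hne : (Finset.powersetCard k (Finset.univ : Finset (Fin n))).Nonempty :=
      ⟨J0, Finset.mem_powersetCard.mpr ⟨Finset.subset_univ _, hJ0card⟩⟩
    obtain ⟨J, hJmem, hJmax⟩ :=
      Finset.exists_max_image (Finset.powersetCard k Finset.univ) (fun J => ∑ j ∈ J, c j) hne
    have hJcard : J.card = k := (Finset.mem_powersetCard.mp hJmem).2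
    -- J dominates its complement
    have hJdom : ∀ j ∈ J, ∀ j', j' ∉ J → c j' ≤ c j := by
      intro j hj j' hj'
      by_contra hlt
      push_neg at hlt
      have hj'e : j' ∉ J.erase j := fun h => hj' (Finset.mem_of_mem_erase h)
      have hmem' : insert j' (J.erase j) ∈ Finset.powersetCard k Finset.univ := by
        refine Finset.mem_powersetCard.mpr ⟨Finset.subset_univ _, ?_⟩
        rw [Finset.card_insert_of_notMem hj'e, Finset.card_erase_of_mem hj, hJcard]
        omega
      have hle := hJmax _ hmem'
      rw [Finset.sum_insert hj'e] at hle
      have hsplit : ∑ x ∈ J.erase j, c x + c j = ∑ x ∈ J, c x :=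
        Finset.sum_erase_add J c hj
      omega
    -- every column in J is nonzero
    have hJpos : ∀ j ∈ J, 1 ≤ c j := by
      by_contra h
      push_neg at h
      obtain ⟨j2, hj2J, hj2⟩ := h
      have hsub : Finset.univ.filter (fun j => 1 ≤ c j) ⊆ J.erase j2 := by
        intro j hj
        rw [Finset.mem_filter] at hj
        have hjJ : j ∈ J := by
          by_contra hjn
          have := hJdom j2 hj2J j hjn
          omega
        exact Finset.mem_erase.mpr ⟨fun he => by rw [he] at hj; omega, hjJ⟩
      have hcard : (Finset.univ.filter (fun j => 1 ≤ c j)).card ≤ k - 1 := by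
        have h1 := Finset.card_le_card hsub
        rw [Finset.card_erase_of_mem hj2J, hJcard] at h1
        exact h1
      have h1 := hmin {i0}
      rw [Finset.sum_singleton, Finset.card_singleton] at h1
      have hsum1 : ∑ j, min 1 (c j) = (Finset.univ.filter (fun j => 1 ≤ c j)).card := by
        rw [Finset.card_filter]
        apply Finset.sum_congr rfl
        intro j _
        by_cases hc : 1 ≤ c j <;> simp [hc] <;> omega
      omega
    -- the reduced tuples
    set r' : Fin m → ℕ := Function.update r i0 0 with hr'
    set c' : Fin n → ℕ := fun j => if j ∈ J then c j - 1 else c j with hc'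
    have hr'eq : ∀ i, i ≠ i0 → r' i = r i := fun i hi => Function.update_of_ne hi _ _
    have hr'i0 : r' i0 = 0 := Function.update_self _ _ _
    have hr'sum : ∑ i, r' i + k = ∑ i, r i := by
      have h1 : ∑ i ∈ Finset.univ.erase i0, r' i + r' i0 = ∑ i, r' i :=
        Finset.sum_erase_add _ _ (Finset.mem_univ i0)
      have h2 : ∑ i ∈ Finset.univ.erase i0, r i + r i0 = ∑ i, r i :=
        Finset.sum_erase_add _ _ (Finset.mem_univ i0)
      have h3 : ∑ i ∈ Finset.univ.erase i0, r' i = ∑ i ∈ Finset.univ.erase i0, r i :=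
        Finset.sum_congr rfl fun i hi => hr'eq i (Finset.ne_of_mem_erase hi)
      omega
    have hc'sum : ∑ j, c' j + k = ∑ j, c j := by
      have h1 : ∑ j ∈ J, c' j + ∑ j ∈ Jᶜ, c' j = ∑ j, c' j := Finset.sum_add_sum_compl J _
      have h2 : ∑ j ∈ J, c j + ∑ j ∈ Jᶜ, c j = ∑ j, c j := Finset.sum_add_sum_compl J _
      have h3 : ∑ j ∈ Jᶜ, c' j = ∑ j ∈ Jᶜ, c j := by
        apply Finset.sum_congr rfl
        intro j hj
        rw [Finset.mem_compl] at hj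
        simp [hc', hj]
      have h4 : ∑ j ∈ J, c' j + J.card = ∑ j ∈ J, c j := by
        have h5 : ∑ j ∈ J, (c' j + 1) = ∑ j ∈ J, c j := by
          apply Finset.sum_congr rfl
          intro j hj
          have := hJpos j hj
          simp only [hc', if_pos hj]
          omega
        rw [Finset.sum_add_distrib, Finset.sum_const, smul_eq_mul, mul_one] at h5
        exact h5
      rw [hJcard] at h4
      omega
    -- key: the min-form criterion for the reduced tuples, for S avoiding i0
    have key : ∀ S : Finset (Fin m), i0 ∉ S → ∑ i ∈ S, r i ≤ ∑ j, min S.card (c' j) := by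
      intro S hi0S
      set s := S.card with hs
      set D := J.filter (fun j => c j ≤ s) with hD
      have hDcard : D.card = ∑ j, (if j ∈ J ∧ c j ≤ s then 1 else 0) := by
        have : D = Finset.univ.filter (fun j => j ∈ J ∧ c j ≤ s) := by
          ext j; simp [hD]
        rw [this, Finset.card_filter]
      have hkey3 : ∑ j, min s (c j) = ∑ j, min s (c' j) + D.card := by
        rw [hDcard, ← Finset.sum_add_distrib]
        apply Finset.sum_congr rfl
        intro j _
        by_cases hjJ : j ∈ J
        · have hj1 := hJpos j hjJ
          by_cases hcs : c j ≤ s <;> simp only [hc', if_pos hjJ, hjJ, hcs, true_and,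
            if_true, if_false] <;> omega
        · simp only [hc', if_neg hjJ, hjJ, false_and, if_false]
          omega
      by_cases hDe : D = ∅
      · have heq : ∑ j, min s (c j) = ∑ j, min s (c' j) := by
          rw [hkey3, hDe]; simp
        have h6 := hmin S
        rw [← hs] at h6
        omega
      · obtain ⟨j2, hj2⟩ := Finset.nonempty_iff_ne_empty.mpr hDe
        rw [hD, Finset.mem_filter] at hj2
        obtain ⟨hj2J, hj2s⟩ := hj2
        set E := Finset.univ.filter (fun j => s + 1 ≤ c j) with hE
        have hEsub : E ⊆ J.filter (fun j => s + 1 ≤ c j) := by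
          intro j hj
          rw [hE, Finset.mem_filter] at hj
          refine Finset.mem_filter.mpr ⟨?_, hj.2⟩
          by_contra hjn
          have := hJdom j2 hj2J j hjn
          omega
        have hcards : E.card + D.card ≤ k := by
          have hdisj : Disjoint (J.filter (fun j => s + 1 ≤ c j)) D := by
            rw [Finset.disjoint_left]
            intro j h1 h2
            rw [Finset.mem_filter] at h1
            rw [hD, Finset.mem_filter] at h2
            omega
          have hunion : (J.filter (fun j => s + 1 ≤ c j)) ∪ D ⊆ J :=
            Finset.union_subset (Finset.filter_subset _ _) (by rw [hD]; exact Finset.filter_subset _ _)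
          have h1 := Finset.card_le_card hunion
          rw [Finset.card_union_of_disjoint hdisj, hJcard] at h1
          have h2 := Finset.card_le_card hEsub
          omega
        have hkey1 := hmin (insert i0 S)
        rw [Finset.sum_insert hi0S, Finset.card_insert_of_notMem hi0S, ← hs] at hkey1
        have hkey2 : ∑ j, min (s + 1) (c j) = ∑ j, min s (c j) + E.card := by
          rw [hE, Finset.card_filter, ← Finset.sum_add_distrib]
          apply Finset.sum_congr rfl
          intro j _
          by_cases hc : s + 1 ≤ c j <;> simp [hc] <;> omega
        rw [hkey2, hkey3] at hkey1
        omega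
    have hmin' : ∀ S : Finset (Fin m), ∑ i ∈ S, r' i ≤ ∑ j, min S.card (c' j) := by
      intro S
      have hcongr : ∑ i ∈ S.erase i0, r' i = ∑ i ∈ S.erase i0, r i :=
        Finset.sum_congr rfl fun i hi => hr'eq i (Finset.ne_of_mem_erase hi)
      have h1 : ∑ i ∈ S, r' i = ∑ i ∈ S.erase i0, r i := by
        by_cases hi : i0 ∈ S
        · have := Finset.sum_erase_add S r' hi
          omega
        · rw [Finset.erase_eq_of_notMem hi] at hcongr ⊢
          exact hcongr
      have h2 := key (S.erase i0) (Finset.notMem_erase i0 S)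
      have h3 : ∑ j, min (S.erase i0).card (c' j) ≤ ∑ j, min S.card (c' j) :=
        Finset.sum_le_sum fun j _ => by
          have := Finset.card_erase_le (s := S) (a := i0)
          omega
      omega
    -- apply the induction hypothesis
    have hr'n : ∀ i, r' i ≤ n := by
      intro i
      by_cases hi : i = i0
      · rw [hi, hr'i0]; omega
      · rw [hr'eq i hi]; exact hrn i
    have hlt : ∑ i, r' i < N := by omega
    obtain ⟨A', hA'01, hA'r, hA'c⟩ := IH (∑ i, r' i) hlt r' c' rfl (by omega) hr'n hmin'
    have hA'i0 : ∀ j, A' i0 j = 0 := by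
      have h0 : ∑ j, A' i0 j = 0 := by
        have : rowSum A' i0 = r' i0 := by rw [hA'r]
        rw [rowSum] at this
        omega
      intro j
      exact (Finset.sum_eq_zero_iff.mp h0) j (Finset.mem_univ j)
    -- assemble the matrix
    refine ⟨fun i j => A' i j + if i = i0 ∧ j ∈ J then 1 else 0, ?_, ?_, ?_⟩
    · intro i j
      dsimp only
      by_cases hi : i = i0
      · rw [hi, hA'i0 j]
        by_cases hj : j ∈ J <;> simp [hj]
      · have := hA'01 i j
        simp only [hi, false_and, if_false]
        omega
    · funext i
      have hsplit : rowSum (fun i j => A' i j + if i = i0 ∧ j ∈ J then 1 else 0) i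
          = rowSum A' i + ∑ j, (if i = i0 ∧ j ∈ J then 1 else 0) := by
        simp only [rowSum]; rw [Finset.sum_add_distrib]
      rw [hsplit, hA'r]
      by_cases hi : i = i0
      · rw [hi]
        have hJc : ∑ j, (if i0 = i0 ∧ j ∈ J then (1 : ℕ) else 0) = J.card := by
          simp [Finset.sum_ite_mem]
        rw [hJc, hJcard, hr'i0]
        omega
      · have h7 : ∑ j, (if i = i0 ∧ j ∈ J then (1 : ℕ) else 0) = 0 := by
          apply Finset.sum_eq_zero
          intro j _
          simp [hi]
        rw [h7, hr'eq i hi]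
        omega
    · funext j
      have hsplit : colSum (fun i j => A' i j + if i = i0 ∧ j ∈ J then 1 else 0) j
          = colSum A' j + ∑ i, (if i = i0 ∧ j ∈ J then 1 else 0) := by
        simp only [colSum]; rw [Finset.sum_add_distrib]
      rw [hsplit, hA'c]
      by_cases hj : j ∈ J
      · have : ∑ i, (if i = i0 ∧ j ∈ J then (1 : ℕ) else 0) = 1 := by
          simp only [hj, and_true]
          rw [Finset.sum_ite_eq' Finset.univ i0 (fun _ => (1 : ℕ)), if_pos (Finset.mem_univ i0)]
        rw [this]
        have := hJpos j hj
        simp only [hc', if_pos hj]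
        omega
      · have : ∑ i, (if i = i0 ∧ j ∈ J then (1 : ℕ) else 0) = 0 := by
          apply Finset.sum_eq_zero
          intro i _
          simp [hj]
        rw [this]
        simp [hc', hj]

/-- Gale–Hoffman / max-flow min-cut criterion: a (0,1)-matrix with row sums r
and column sums c exists iff for all subsets S of rows and T of columns,
∑_{i ∈ S} r i ≤ |S| * (n - |T|) + ∑_{j ∈ T} c j. -/
theorem zero_one_matrix_cut_criterion (m n : ℕ) (r : Fin m → ℕ) (c : Fin n → ℕ)
    (hrn : ∀ i, r i ≤ n) (hcm : ∀ j, c j ≤ m) (hsum : ∑ i, r i = ∑ j, c j) :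
    (∃ A : Matrix (Fin m) (Fin n) ℕ, ZeroOne A ∧ rowSum A = r ∧ colSum A = c) ↔
    (∀ S : Finset (Fin m), ∀ T : Finset (Fin n),
      ∑ i ∈ S, r i ≤ S.card * (n - T.card) + ∑ j ∈ T, c j) := by
  constructor
  · rintro ⟨A, hA01, hAr, hAc⟩ S T
    have h1 : ∑ i ∈ S, r i = ∑ i ∈ S, (∑ j ∈ T, A i j + ∑ j ∈ Tᶜ, A i j) := by
      apply Finset.sum_congr rfl
      intro i _
      rw [← hAr, rowSum, Finset.sum_add_sum_compl T]
    rw [h1, Finset.sum_add_distrib]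
    have h2 : ∑ i ∈ S, ∑ j ∈ T, A i j ≤ ∑ j ∈ T, c j := by
      refine Finset.sum_comm.trans_le ?_
      apply Finset.sum_le_sum
      intro j _
      rw [← hAc, colSum]
      exact Finset.sum_le_sum_of_subset (Finset.subset_univ S)
    have h3 : ∑ i ∈ S, ∑ j ∈ Tᶜ, A i j ≤ S.card * (n - T.card) := by
      calc ∑ i ∈ S, ∑ j ∈ Tᶜ, A i j ≤ ∑ _i ∈ S, ∑ _j ∈ Tᶜ, 1 :=
            Finset.sum_le_sum fun i _ => Finset.sum_le_sum fun j _ => hA01 i j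
      _ = S.card * Tᶜ.card := by
            rw [Finset.sum_const, Finset.sum_const, smul_eq_mul, smul_eq_mul, mul_one]
      _ = S.card * (n - T.card) := by rw [Finset.card_compl, Fintype.card_fin]
    omega
  · intro hcut
    exact exists_matrix_of_min (∑ i, r i) r c rfl hsum hrn (cut_to_min r c hcut)
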